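/- The number of 321-avoiding permutations of {1,...,n} with exactly e excedances is the Narayana number N(n,e) = (1/n)·C(n,e)·C(n,e+1). -/

import Mathlib

open Finset

/-- π avoids the pattern 321. -/
def Avoids321 {n : ℕ} (π : Equiv.Perm (Fin n)) : Prop :=
  ¬ ∃ i j k : Fin n, i < j ∧ j < k ∧ π k < π j ∧ π j < π i

open scoped Classical


section OrderHelpers
variable {α : Type*} [LinearOrder α]

lemma filter_lt_orderEmb_eq (s : Finset α) {k : ℕ} (h : s.card = k) (j : Fin k) :
    s.filter (· < s.orderEmbOfFin h j) = (Finset.Iio j).image (s.orderEmbOfFin h) := by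
  ext x
  simp only [mem_filter, mem_image, mem_Iio]
  constructor
  · rintro ⟨hxs, hlt⟩
    obtain ⟨i, rfl⟩ : ∃ i, s.orderEmbOfFin h i = x := by
      have : x ∈ Set.range (s.orderEmbOfFin h) := by
        rw [Finset.range_orderEmbOfFin]; exact hxs
      exact this
    exact ⟨i, (s.orderEmbOfFin h).lt_iff_lt.mp hlt, rfl⟩
  · rintro ⟨i, hij, rfl⟩
    exact ⟨Finset.orderEmbOfFin_mem s h i, (s.orderEmbOfFin h).lt_iff_lt.mpr hij⟩

lemma card_filter_lt_orderEmb (s : Finset α) {k : ℕ} (h : s.card = k) (j : Fin k) :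
    (s.filter (· < s.orderEmbOfFin h j)).card = j := by
  rw [filter_lt_orderEmb_eq, Finset.card_image_of_injective _ (s.orderEmbOfFin h).injective,
    Fin.card_Iio]

lemma filter_le_orderEmb_eq (s : Finset α) {k : ℕ} (h : s.card = k) (j : Fin k) :
    s.filter (· ≤ s.orderEmbOfFin h j) = (Finset.Iic j).image (s.orderEmbOfFin h) := by
  ext x
  simp only [mem_filter, mem_image, mem_Iic]
  constructor
  · rintro ⟨hxs, hlt⟩
    obtain ⟨i, rfl⟩ : ∃ i, s.orderEmbOfFin h i = x := by
      have : x ∈ Set.range (s.orderEmbOfFin h) := by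
        rw [Finset.range_orderEmbOfFin]; exact hxs
      exact this
    exact ⟨i, (s.orderEmbOfFin h).le_iff_le.mp hlt, rfl⟩
  · rintro ⟨i, hij, rfl⟩
    exact ⟨Finset.orderEmbOfFin_mem s h i, (s.orderEmbOfFin h).le_iff_le.mpr hij⟩

lemma card_filter_le_orderEmb (s : Finset α) {k : ℕ} (h : s.card = k) (j : Fin k) :
    (s.filter (· ≤ s.orderEmbOfFin h j)).card = j + 1 := by
  rw [filter_le_orderEmb_eq, Finset.card_image_of_injective _ (s.orderEmbOfFin h).injective,
    Fin.card_Iic]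

lemma orderEmb_lt_of_card_filter (s : Finset α) {k : ℕ} (h : s.card = k) (j : Fin k) (x : α)
    (hc : (j : ℕ) + 1 ≤ (s.filter (· < x)).card) : s.orderEmbOfFin h j < x := by
  by_contra hle
  push_neg at hle
  have hsub : s.filter (· < x) ⊆ s.filter (· < s.orderEmbOfFin h j) := by
    intro a ha; rw [mem_filter] at *; exact ⟨ha.1, lt_of_lt_of_le ha.2 hle⟩
  have := card_le_card hsub
  rw [card_filter_lt_orderEmb] at this
  omega

lemma orderEmb_le_of_card_filter (s : Finset α) {k : ℕ} (h : s.card = k) (j : Fin k) (x : α)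
    (hc : (j : ℕ) + 1 ≤ (s.filter (· ≤ x)).card) : s.orderEmbOfFin h j ≤ x := by
  by_contra hle
  push_neg at hle
  have hsub : s.filter (· ≤ x) ⊆ s.filter (· < s.orderEmbOfFin h j) := by
    intro a ha; rw [mem_filter] at *; exact ⟨ha.1, lt_of_le_of_lt ha.2 hle⟩
  have := card_le_card hsub
  rw [card_filter_lt_orderEmb] at this
  omega

end OrderHelpers

def Dom (E V : Finset ℕ) : Prop :=
  ∀ x : ℕ, (V.filter (· ≤ x)).card ≤ (E.filter (· < x)).card

noncomputable def Pst (m a b : ℕ) : Finset (Finset ℕ × Finset ℕ) :=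
  ((range m).powersetCard a ×ˢ (range m).powersetCard b).filter fun p => Dom p.1 p.2

lemma mem_Pst {m a b : ℕ} {p : Finset ℕ × Finset ℕ} :
    p ∈ Pst m a b ↔ (p.1 ⊆ range m ∧ p.1.card = a) ∧ (p.2 ⊆ range m ∧ p.2.card = b)
      ∧ Dom p.1 p.2 := by
  simp [Pst, mem_filter, mem_powersetCard, and_assoc]

-- filter interaction with a top element
lemma filter_le_erase_top {s : Finset ℕ} {m x : ℕ} (hx : x < m) :
    (s.erase m).filter (· ≤ x) = s.filter (· ≤ x) := by
  rw [filter_erase, erase_eq_of_notMem]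
  simp only [mem_filter]
  rintro ⟨-, h⟩; omega

lemma filter_lt_erase_top {s : Finset ℕ} {m x : ℕ} (hx : x ≤ m) :
    (s.erase m).filter (· < x) = s.filter (· < x) := by
  rw [filter_erase, erase_eq_of_notMem]
  simp only [mem_filter]
  rintro ⟨-, h⟩; omega

lemma filter_lt_eq_erase {s : Finset ℕ} {m : ℕ} (hs : ∀ a ∈ s, a < m + 1) :
    s.filter (· < m) = s.erase m := by
  ext a
  simp only [mem_filter, mem_erase]
  constructor
  · rintro ⟨h1, h2⟩; exact ⟨by omega, h1⟩
  · rintro ⟨h1, h2⟩; exact ⟨h2, by have := hs a h2; omega⟩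

lemma Dom_top {E V : Finset ℕ} {m : ℕ} (hE : ∀ a ∈ E, a < m + 1) (hV : ∀ a ∈ V, a < m + 1) :
    Dom E V ↔ Dom (E.erase m) (V.erase m) ∧ V.card ≤ (E.erase m).card := by
  constructor
  · intro h
    have hcard : V.card ≤ (E.erase m).card := by
      have := h m
      rwa [filter_true_of_mem (fun a ha => by have := hV a ha; omega),
        filter_lt_eq_erase hE] at this
    refine ⟨fun x => ?_, hcard⟩
    rcases lt_or_ge x m with hx | hx
    · rw [filter_le_erase_top hx, filter_lt_erase_top hx.le]
      exact h x
    · calc ((V.erase m).filter (· ≤ x)).card ≤ (V.erase m).card := card_le_card (filter_subset _ _)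
        _ ≤ V.card := card_le_card (erase_subset _ _)
        _ ≤ (E.erase m).card := hcard
        _ = ((E.erase m).filter (· < x)).card := by
            rw [filter_true_of_mem]
            intro a ha
            have := hE a (erase_subset _ _ ha)
            have : a ≠ m := (mem_erase.mp ha).1
            omega
  · rintro ⟨h, hcard⟩ x
    rcases lt_or_ge x m with hx | hx
    · rw [← filter_le_erase_top (s := V) hx, ← filter_lt_erase_top (s := E) hx.le]
      exact h x
    · calc (V.filter (· ≤ x)).card ≤ V.card := card_le_card (filter_subset _ _)
        _ ≤ (E.erase m).card := hcard
        _ ≤ (E.filter (· < x)).card := by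
            apply card_le_card
            intro a ha
            rw [mem_erase] at ha
            rw [mem_filter]
            have := hE a ha.2
            exact ⟨ha.2, by have := ha.1; omega⟩

lemma subset_range_succ_mem {s : Finset ℕ} {m : ℕ} (hs : s ⊆ range (m+1)) :
    ∀ a ∈ s, a < m + 1 := fun a ha => mem_range.mp (hs ha)

lemma subset_range_of_not_mem {s : Finset ℕ} {m : ℕ} (hs : s ⊆ range (m+1)) (hm : m ∉ s) :
    s ⊆ range m := by
  intro a ha
  have := mem_range.mp (hs ha)
  rw [mem_range]
  rcases Nat.lt_succ_iff_lt_or_eq.mp this with h | rfl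
  · exact h
  · exact absurd ha hm

lemma erase_subset_range {s : Finset ℕ} {m : ℕ} (hs : s ⊆ range (m+1)) :
    s.erase m ⊆ range m :=
  subset_range_of_not_mem (fun a ha => hs (erase_subset _ _ ha)) (notMem_erase _ _)

lemma piece00 (m a b : ℕ) :
    ((Pst (m+1) a b).filter fun p => m ∉ p.1 ∧ m ∉ p.2) = Pst m a b := by
  ext p
  simp only [mem_filter, mem_Pst]
  constructor
  · rintro ⟨⟨⟨h1, h2⟩, ⟨h3, h4⟩, h5⟩, h6, h7⟩
    exact ⟨⟨subset_range_of_not_mem h1 h6, h2⟩, ⟨subset_range_of_not_mem h3 h7, h4⟩, h5⟩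
  · rintro ⟨⟨h1, h2⟩, ⟨h3, h4⟩, h5⟩
    have e1 : m ∉ p.1 := fun h => by simpa using mem_range.mp (h1 h)
    have e2 : m ∉ p.2 := fun h => by simpa using mem_range.mp (h3 h)
    exact ⟨⟨⟨h1.trans (range_subset_range.mpr (Nat.le_succ m)), h2⟩,
      ⟨h3.trans (range_subset_range.mpr (Nat.le_succ m)), h4⟩, h5⟩, e1, e2⟩

lemma piece01 (m a b : ℕ) (hb : 1 ≤ b) (hba : b ≤ a) :
    ((Pst (m+1) a b).filter fun p => m ∉ p.1 ∧ m ∈ p.2).card = (Pst m a (b-1)).card := by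
  apply card_nbij' (fun p => (p.1, p.2.erase m)) (fun q => (q.1, insert m q.2))
  · rintro p hp
    rw [mem_coe, mem_filter, mem_Pst] at hp
    obtain ⟨⟨⟨h1, h2⟩, ⟨h3, h4⟩, h5⟩, h6, h7⟩ := hp
    rw [mem_coe, mem_Pst]
    have hdom := (Dom_top (subset_range_succ_mem h1) (subset_range_succ_mem h3)).mp h5
    rw [erase_eq_of_notMem h6] at hdom
    refine ⟨⟨subset_range_of_not_mem h1 h6, h2⟩,
      ⟨erase_subset_range h3, by rw [card_erase_of_mem h7, h4]⟩, hdom.1⟩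
  · rintro q hq
    rw [mem_coe, mem_Pst] at hq
    obtain ⟨⟨h1, h2⟩, ⟨h3, h4⟩, h5⟩ := hq
    have hm2 : m ∉ q.2 := fun h => by simpa using mem_range.mp (h3 h)
    have hm1 : m ∉ q.1 := fun h => by simpa using mem_range.mp (h1 h)
    rw [mem_coe, mem_filter, mem_Pst]
    have hsub2 : insert m q.2 ⊆ range (m+1) := by
      intro x hx
      rcases mem_insert.mp hx with rfl | hx
      · simp
      · exact (h3.trans (range_subset_range.mpr (Nat.le_succ m))) hx
    refine ⟨⟨⟨h1.trans (range_subset_range.mpr (Nat.le_succ m)), h2⟩,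
      ⟨hsub2, by rw [card_insert_of_notMem hm2, h4]; omega⟩, ?_⟩, hm1, mem_insert_self _ _⟩
    rw [Dom_top (subset_range_succ_mem (h1.trans (range_subset_range.mpr (Nat.le_succ m))))
      (subset_range_succ_mem hsub2), erase_insert hm2, erase_eq_of_notMem hm1]
    exact ⟨h5, by rw [card_insert_of_notMem hm2, h4, h2]; omega⟩
  · rintro ⟨p1, p2⟩ hp
    rw [mem_coe, mem_filter] at hp
    simp only [Prod.mk.injEq]
    exact ⟨trivial, insert_erase hp.2.2⟩
  · rintro ⟨q1, q2⟩ hq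
    rw [mem_coe, mem_Pst] at hq
    have hm2 : m ∉ q2 := fun h => by simpa using mem_range.mp (hq.2.1.1 h)
    simp only [Prod.mk.injEq]
    exact ⟨trivial, erase_insert hm2⟩

lemma piece10 (m a b : ℕ) (hba : b < a) :
    ((Pst (m+1) a b).filter fun p => m ∈ p.1 ∧ m ∉ p.2).card = (Pst m (a-1) b).card := by
  apply card_nbij' (fun p => (p.1.erase m, p.2)) (fun q => (insert m q.1, q.2))
  · rintro p hp
    rw [mem_coe, mem_filter, mem_Pst] at hp
    obtain ⟨⟨⟨h1, h2⟩, ⟨h3, h4⟩, h5⟩, h6, h7⟩ := hp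
    rw [mem_coe, mem_Pst]
    have hdom := (Dom_top (subset_range_succ_mem h1) (subset_range_succ_mem h3)).mp h5
    rw [erase_eq_of_notMem h7] at hdom
    exact ⟨⟨erase_subset_range h1, by rw [card_erase_of_mem h6, h2]⟩,
      ⟨subset_range_of_not_mem h3 h7, h4⟩, hdom.1⟩
  · rintro q hq
    rw [mem_coe, mem_Pst] at hq
    obtain ⟨⟨h1, h2⟩, ⟨h3, h4⟩, h5⟩ := hq
    have hm1 : m ∉ q.1 := fun h => by simpa using mem_range.mp (h1 h)
    have hm2 : m ∉ q.2 := fun h => by simpa using mem_range.mp (h3 h)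
    rw [mem_coe, mem_filter, mem_Pst]
    have hsub1 : insert m q.1 ⊆ range (m+1) := by
      intro x hx
      rcases mem_insert.mp hx with rfl | hx
      · simp
      · exact (h1.trans (range_subset_range.mpr (Nat.le_succ m))) hx
    refine ⟨⟨⟨hsub1, by rw [card_insert_of_notMem hm1, h2]; omega⟩,
      ⟨h3.trans (range_subset_range.mpr (Nat.le_succ m)), h4⟩, ?_⟩, mem_insert_self _ _, hm2⟩
    rw [Dom_top (subset_range_succ_mem hsub1)
      (subset_range_succ_mem (h3.trans (range_subset_range.mpr (Nat.le_succ m)))),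
      erase_insert hm1, erase_eq_of_notMem hm2]
    exact ⟨h5, by rw [h4, h2]; omega⟩
  · rintro ⟨p1, p2⟩ hp
    rw [mem_coe, mem_filter] at hp
    simp only [Prod.mk.injEq]
    exact ⟨insert_erase hp.2.1, trivial⟩
  · rintro ⟨q1, q2⟩ hq
    rw [mem_coe, mem_Pst] at hq
    have hm1 : m ∉ q1 := fun h => by simpa using mem_range.mp (hq.1.1 h)
    simp only [Prod.mk.injEq]
    exact ⟨erase_insert hm1, trivial⟩

lemma piece11 (m a b : ℕ) (hb : 1 ≤ b) (hba : b < a) :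
    ((Pst (m+1) a b).filter fun p => m ∈ p.1 ∧ m ∈ p.2).card = (Pst m (a-1) (b-1)).card := by
  apply card_nbij' (fun p => (p.1.erase m, p.2.erase m)) (fun q => (insert m q.1, insert m q.2))
  · rintro p hp
    rw [mem_coe, mem_filter, mem_Pst] at hp
    obtain ⟨⟨⟨h1, h2⟩, ⟨h3, h4⟩, h5⟩, h6, h7⟩ := hp
    rw [mem_coe, mem_Pst]
    have hdom := (Dom_top (subset_range_succ_mem h1) (subset_range_succ_mem h3)).mp h5
    exact ⟨⟨erase_subset_range h1, by rw [card_erase_of_mem h6, h2]⟩,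
      ⟨erase_subset_range h3, by rw [card_erase_of_mem h7, h4]⟩, hdom.1⟩
  · rintro q hq
    rw [mem_coe, mem_Pst] at hq
    obtain ⟨⟨h1, h2⟩, ⟨h3, h4⟩, h5⟩ := hq
    have hm1 : m ∉ q.1 := fun h => by simpa using mem_range.mp (h1 h)
    have hm2 : m ∉ q.2 := fun h => by simpa using mem_range.mp (h3 h)
    rw [mem_coe, mem_filter, mem_Pst]
    have hsub1 : insert m q.1 ⊆ range (m+1) := by
      intro x hx
      rcases mem_insert.mp hx with rfl | hx
      · simp
      · exact (h1.trans (range_subset_range.mpr (Nat.le_succ m))) hx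
    have hsub2 : insert m q.2 ⊆ range (m+1) := by
      intro x hx
      rcases mem_insert.mp hx with rfl | hx
      · simp
      · exact (h3.trans (range_subset_range.mpr (Nat.le_succ m))) hx
    refine ⟨⟨⟨hsub1, by rw [card_insert_of_notMem hm1, h2]; omega⟩,
      ⟨hsub2, by rw [card_insert_of_notMem hm2, h4]; omega⟩, ?_⟩,
      mem_insert_self _ _, mem_insert_self _ _⟩
    rw [Dom_top (subset_range_succ_mem hsub1) (subset_range_succ_mem hsub2),
      erase_insert hm1, erase_insert hm2]
    exact ⟨h5, by rw [card_insert_of_notMem hm2, h4, h2]; omega⟩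
  · rintro ⟨p1, p2⟩ hp
    rw [mem_coe, mem_filter] at hp
    simp only [Prod.mk.injEq]
    exact ⟨insert_erase hp.2.1, insert_erase hp.2.2⟩
  · rintro ⟨q1, q2⟩ hq
    rw [mem_coe, mem_Pst] at hq
    have hm1 : m ∉ q1 := fun h => by simpa using mem_range.mp (hq.1.1 h)
    have hm2 : m ∉ q2 := fun h => by simpa using mem_range.mp (hq.2.1.1 h)
    simp only [Prod.mk.injEq]
    exact ⟨erase_insert hm1, erase_insert hm2⟩

lemma pieceTop_empty (m a : ℕ) {p : Finset ℕ × Finset ℕ} (hp : p ∈ Pst (m+1) a a)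
    (hm : m ∈ p.1) : False := by
  rw [mem_Pst] at hp
  obtain ⟨⟨h1, h2⟩, ⟨h3, h4⟩, h5⟩ := hp
  have hdom := (Dom_top (subset_range_succ_mem h1) (subset_range_succ_mem h3)).mp h5
  have := hdom.2
  rw [card_erase_of_mem hm, h2, h4] at this
  have ha : 0 < a := h2 ▸ card_pos.mpr ⟨m, hm⟩
  omega

lemma Pst_fourfold (m a b : ℕ) :
    (Pst (m+1) a b).card
      = ((Pst (m+1) a b).filter fun p => m ∈ p.1 ∧ m ∈ p.2).card
      + ((Pst (m+1) a b).filter fun p => m ∈ p.1 ∧ m ∉ p.2).card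
      + (((Pst (m+1) a b).filter fun p => m ∉ p.1 ∧ m ∈ p.2).card
      + ((Pst (m+1) a b).filter fun p => m ∉ p.1 ∧ m ∉ p.2).card) := by
  have A := card_filter_add_card_filter_not
    (s := Pst (m+1) a b) (p := fun p => m ∈ p.1)
  have B := card_filter_add_card_filter_not
    (s := (Pst (m+1) a b).filter fun p => m ∈ p.1) (p := fun p => m ∈ p.2)
  have C := card_filter_add_card_filter_not
    (s := (Pst (m+1) a b).filter fun p => ¬ m ∈ p.1) (p := fun p => m ∈ p.2)
  rw [filter_filter, filter_filter] at B C
  omega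

lemma Pst_split_eq (m a : ℕ) (ha : 1 ≤ a) :
    (Pst (m+1) a a).card = (Pst m a a).card + (Pst m a (a-1)).card := by
  have h := Pst_fourfold m a a
  rw [piece00, piece01 m a a ha le_rfl] at h
  rw [filter_eq_empty_iff.mpr (fun {p} hp hm => absurd hm (by
      intro hmem; exact pieceTop_empty m a hp hmem.1)),
    filter_eq_empty_iff.mpr (fun {p} hp hm => absurd hm (by
      intro hmem; exact pieceTop_empty m a hp hmem.1))] at h
  simp only [card_empty] at h
  omega

lemma Pst_split_lt (m a b : ℕ) (hb : 1 ≤ b) (hba : b < a) :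
    (Pst (m+1) a b).card = (Pst m (a-1) (b-1)).card + (Pst m (a-1) b).card
      + ((Pst m a (b-1)).card + (Pst m a b).card) := by
  have h := Pst_fourfold m a b
  rw [piece00, piece01 m a b hb hba.le, piece10 m a b hba, piece11 m a b hb hba] at h
  exact h

lemma Pst_empty_one (a b : ℕ) (hb : 1 ≤ b) : (Pst 1 a b) = ∅ := by
  rw [eq_empty_iff_forall_notMem]
  intro p hp
  rw [mem_Pst] at hp
  obtain ⟨⟨h1, h2⟩, ⟨h3, h4⟩, h5⟩ := hp
  have hne : p.2.Nonempty := card_pos.mp (by omega)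
  obtain ⟨v, hv⟩ := hne
  have hv0 : v = 0 := by have := mem_range.mp (h3 hv); omega
  have := h5 0
  have hle : 0 < (p.2.filter (· ≤ 0)).card := card_pos.mpr ⟨v, mem_filter.mpr ⟨hv, by omega⟩⟩
  have : (p.1.filter (· < 0)).card = 0 := by
    rw [card_eq_zero, filter_eq_empty_iff]; intro x _; omega
  omega

lemma Pst_b_zero (m a : ℕ) : (Pst m a 0).card = Nat.choose m a := by
  have : Pst m a 0 = (range m).powersetCard a ×ˢ {(∅ : Finset ℕ)} := by
    ext p
    rw [mem_Pst, mem_product, mem_powersetCard, mem_singleton]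
    constructor
    · rintro ⟨⟨h1, h2⟩, ⟨h3, h4⟩, h5⟩
      exact ⟨⟨h1, h2⟩, card_eq_zero.mp h4⟩
    · rintro ⟨⟨h1, h2⟩, h3⟩
      refine ⟨⟨h1, h2⟩, ⟨by rw [h3]; exact empty_subset _, by rw [h3]; rfl⟩, ?_⟩
      intro x
      rw [h3]
      simp
  rw [this, card_product, card_singleton, card_powersetCard, card_range, mul_one]

theorem Pst_card_eq : ∀ m a b : ℕ, b ≤ a →
    ((Pst m a b).card : ℤ)
      + (Nat.choose m (a+1) : ℤ) * ((Nat.choose m b : ℤ) - (Nat.choose (m-1) b : ℤ))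
    = (Nat.choose m a : ℤ) * (Nat.choose (m-1) b : ℤ) := by
  intro m
  induction m with
  | zero =>
    intro a b hba
    simp only [Nat.zero_sub, sub_self, mul_zero, add_zero]
    rcases Nat.eq_zero_or_pos a with rfl | ha
    · interval_cases b
      have : Pst 0 0 0 = {((∅ : Finset ℕ), (∅ : Finset ℕ))} := by
        ext p
        rw [mem_Pst, mem_singleton]
        constructor
        · rintro ⟨⟨h1, h2⟩, ⟨h3, h4⟩, h5⟩
          have := card_eq_zero.mp h2
          have := card_eq_zero.mp h4
          exact Prod.ext (by simpa using card_eq_zero.mp h2) (by simpa using card_eq_zero.mp h4)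
        · rintro rfl
          exact ⟨⟨empty_subset _, rfl⟩, ⟨empty_subset _, rfl⟩, fun x => by simp⟩
      rw [this]
      simp
    · have h1 : (Pst 0 a b).card = 0 := by
        rw [card_eq_zero, eq_empty_iff_forall_notMem]
        intro p hp
        rw [mem_Pst] at hp
        obtain ⟨⟨hs, hc⟩, -, -⟩ := hp
        have : p.1 = ∅ := subset_empty.mp (by simpa using hs)
        rw [this] at hc
        simp at hc
        omega
      rw [h1, Nat.choose_eq_zero_of_lt (by omega : (0:ℕ) < a)]
      simp
  | succ m ih =>
    intro a b hba
    rcases Nat.eq_zero_or_pos b with rfl | hb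
    · rw [Pst_b_zero]
      simp [Nat.succ_sub_one]
    rcases Nat.eq_zero_or_pos m with rfl | hm
    · -- m + 1 = 1
      have h0 : (Pst 1 a b).card = 0 := by rw [Pst_empty_one a b hb]; rfl
      rw [h0]
      have hb0 : Nat.choose 0 b = 0 := Nat.choose_eq_zero_of_lt (by omega)
      have ha1 : Nat.choose 1 (a+1) = 0 := Nat.choose_eq_zero_of_lt (by omega)
      simp [hb0, ha1]
    -- now m ≥ 1, b ≥ 1
    obtain ⟨d, rfl⟩ : ∃ d, m = d + 1 := ⟨m - 1, by omega⟩
    obtain ⟨c, rfl⟩ : ∃ c, b = c + 1 := ⟨b - 1, by omega⟩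
    rcases eq_or_lt_of_le hba with rfl | hlt
    · -- b = a
      have key := Pst_split_eq (d+1) (c+1) (by omega)
      have I1 := ih (c+1) (c+1) le_rfl
      have I2 := ih (c+1) c (by omega)
      simp only [Nat.add_sub_cancel] at key I1 I2 ⊢
      have keyz : ((Pst (d+1+1) (c+1) (c+1)).card : ℤ)
          = ((Pst (d+1) (c+1) (c+1)).card : ℤ) + ((Pst (d+1) (c+1) c).card : ℤ) := by
        exact_mod_cast congrArg (Nat.cast : ℕ → ℤ) key
      simp only [Nat.choose_succ_succ'] at I1 I2 keyz ⊢
      push_cast at I1 I2 keyz ⊢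
      linear_combination I1 + I2 + keyz
    · -- b < a
      obtain ⟨s, rfl⟩ : ∃ s, a = c + 1 + s + 1 := ⟨a - c - 2, by omega⟩
      have key := Pst_split_lt (d+1) (c+1+s+1) (c+1) (by omega) (by omega)
      have I1 := ih (c+1+s+1) (c+1) (by omega)
      have I2 := ih (c+1+s+1) c (by omega)
      have I3 := ih (c+1+s) (c+1) (by omega)
      have I4 := ih (c+1+s) c (by omega)
      simp only [Nat.add_sub_cancel] at key I1 I2 I3 I4 ⊢
      have keyz : ((Pst (d+1+1) (c+1+s+1) (c+1)).card : ℤ)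
          = ((Pst (d+1) (c+1+s) c).card : ℤ) + ((Pst (d+1) (c+1+s) (c+1)).card : ℤ)
          + (((Pst (d+1) (c+1+s+1) c).card : ℤ) + ((Pst (d+1) (c+1+s+1) (c+1)).card : ℤ)) := by
        exact_mod_cast congrArg (Nat.cast : ℕ → ℤ) key
      simp only [Nat.choose_succ_succ'] at I1 I2 I3 I4 keyz ⊢
      push_cast at I1 I2 I3 I4 keyz ⊢
      linear_combination I1 + I2 + I3 + I4 + keyz


theorem n_mul_Pst (n e : ℕ) (hn : 0 < n) :
    n * (Pst n e e).card = Nat.choose n e * Nat.choose n (e+1) := by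
  obtain ⟨d, rfl⟩ : ∃ d, n = d + 1 := ⟨n - 1, by omega⟩
  have E := Pst_card_eq (d+1) e e le_rfl
  simp only [Nat.add_sub_cancel] at E
  have goalz : ((d:ℤ)+1) * ((Pst (d+1) e e).card : ℤ)
      = (Nat.choose (d+1) e : ℤ) * (Nat.choose (d+1) (e+1) : ℤ) := by
    rcases Nat.eq_zero_or_pos e with rfl | he
    · have hcard : (((Pst (d+1) 0 0).card : ℕ) : ℤ) = 1 := by simpa using E
      rw [hcard, Nat.choose_zero_right, Nat.choose_one_right]
      push_cast
      ring
    obtain ⟨c, rfl⟩ : ∃ c, e = c + 1 := ⟨e - 1, by omega⟩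
    have h1 := Nat.add_one_mul_choose_eq d (c+1)
    have h2 := Nat.add_one_mul_choose_eq d c
    have h1z : ((d:ℤ)+1) * (Nat.choose d (c+1) : ℤ)
        = (Nat.choose (d+1) (c+2) : ℤ) * ((c:ℤ)+2) := by exact_mod_cast h1
    have h2z : ((d:ℤ)+1) * (Nat.choose d c : ℤ)
        = (Nat.choose (d+1) (c+1) : ℤ) * ((c:ℤ)+1) := by exact_mod_cast h2
    simp only [Nat.choose_succ_succ'] at E h1z h2z ⊢
    push_cast at E h1z h2z ⊢
    linear_combination ((d:ℤ)+1) * E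
      + ((Nat.choose d c : ℤ) + (Nat.choose d (c+1) : ℤ)) * h1z
      - ((Nat.choose d (c+1) : ℤ) + (Nat.choose d (c+2) : ℤ)) * h2z
  exact_mod_cast goalz

variable {n : ℕ}

lemma card_filter_perm_lt (π : Equiv.Perm (Fin n)) (c : Fin n) :
    (univ.filter (fun k : Fin n => π k < c)).card = (c : ℕ) := by
  rw [← Fin.card_Iio (b := c)]
  apply card_nbij (i := fun k => π k)
  · intro k hk
    rw [mem_coe, mem_filter] at hk
    rw [mem_coe, mem_Iio]
    exact hk.2
  · intro a _ b _ hab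
    exact π.injective hab
  · intro v hv
    simp only [coe_Iio, Set.mem_Iio] at hv
    refine ⟨π.symm v, ?_, by simp⟩
    simp only [mem_coe, mem_filter]
    exact ⟨mem_univ _, by simpa using hv⟩

lemma card_filter_perm_gt (π : Equiv.Perm (Fin n)) (c : Fin n) :
    (univ.filter (fun k : Fin n => c < π k)).card = n - 1 - (c : ℕ) := by
  rw [← Fin.card_Ioi (a := c)]
  apply card_nbij (i := fun k => π k)
  · intro k hk
    rw [mem_coe, mem_filter] at hk
    rw [mem_coe, mem_Ioi]
    exact hk.2
  · intro a _ b _ hab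
    exact π.injective hab
  · intro v hv
    simp only [coe_Ioi, Set.mem_Ioi] at hv
    refine ⟨π.symm v, ?_, by simp⟩
    simp only [mem_coe, mem_filter]
    exact ⟨mem_univ _, by simpa using hv⟩

lemma mono_exc {π : Equiv.Perm (Fin n)} (hA : Avoids321 π) {i j : Fin n}
    (hi : i < π i) (hj : j < π j) (hij : i < j) : π i < π j := by
  rcases lt_or_ge (π i) (π j) with h | h
  · exact h
  have hne : π j < π i := lt_of_le_of_ne h (fun hh => absurd (π.injective hh.symm) hij.ne)
  exfalso
  set A := univ.filter (fun k : Fin n => π k < π j) with hA'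
  have hcardA : A.card = ((π j : Fin n) : ℕ) := card_filter_perm_lt π (π j)
  have hsplit := card_filter_add_card_filter_not (s := A) (p := fun k => k ≤ j)
  have hsub : A.filter (fun k => k ≤ j) ⊆ ((Iic j).erase j).erase i := by
    intro k hk
    rw [mem_filter, mem_filter] at hk
    obtain ⟨⟨-, hk1⟩, hk2⟩ := hk
    rw [mem_erase, mem_erase, mem_Iic]
    refine ⟨?_, ?_, hk2⟩
    · rintro rfl; exact absurd hne (lt_asymm hk1)
    · rintro rfl; exact lt_irrefl _ hk1
  have hc2 : (((Iic j).erase j).erase i).card = (j : ℕ) - 1 := by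
    rw [card_erase_of_mem, card_erase_of_mem (mem_Iic.mpr le_rfl), Fin.card_Iic]
    · omega
    · rw [mem_erase, mem_Iic]
      exact ⟨hij.ne, hij.le⟩
  have hle2 := card_le_card hsub
  have hnonempty : (A.filter (fun k => ¬ k ≤ j)).Nonempty := by
    rw [← card_pos]
    have hj' : (j : ℕ) < ((π j : Fin n) : ℕ) := hj
    omega
  obtain ⟨k, hk⟩ := hnonempty
  rw [mem_filter, mem_filter] at hk
  obtain ⟨⟨-, hk1⟩, hk2⟩ := hk
  push_neg at hk2
  exact hA ⟨i, j, k, hij, hk2, hk1, hne⟩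

lemma mono_nonexc {π : Equiv.Perm (Fin n)} (hA : Avoids321 π) {i j : Fin n}
    (hi : ¬ i < π i) (hj : ¬ j < π j) (hij : i < j) : π i < π j := by
  rcases lt_or_ge (π i) (π j) with h | h
  · exact h
  have hne : π j < π i := lt_of_le_of_ne h (fun hh => absurd (π.injective hh.symm) hij.ne)
  exfalso
  push_neg at hi hj
  set B := univ.filter (fun k : Fin n => π i < π k) with hB'
  have hcardB : B.card = n - 1 - ((π i : Fin n) : ℕ) := card_filter_perm_gt π (π i)
  have hsplit := card_filter_add_card_filter_not (s := B) (p := fun k => k < i)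
  have hsub : B.filter (fun k => ¬ k < i) ⊆ ((Ici i).erase i).erase j := by
    intro k hk
    rw [mem_filter, mem_filter] at hk
    obtain ⟨⟨-, hk1⟩, hk2⟩ := hk
    push_neg at hk2
    rw [mem_erase, mem_erase, mem_Ici]
    refine ⟨?_, ?_, hk2⟩
    · rintro rfl; exact absurd hne (lt_asymm hk1)
    · rintro rfl; exact lt_irrefl _ hk1
  have hc2 : (((Ici i).erase i).erase j).card = n - (i : ℕ) - 2 := by
    rw [card_erase_of_mem, card_erase_of_mem (mem_Ici.mpr le_rfl), Fin.card_Ici]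
    · omega
    · rw [mem_erase, mem_Ici]
      exact ⟨hij.ne', hij.le⟩
  have hle2 := card_le_card hsub
  have hnonempty : (B.filter (fun k => k < i)).Nonempty := by
    rw [← card_pos]
    have hi' : ((π i : Fin n) : ℕ) ≤ (i : ℕ) := hi
    have hin : (i : ℕ) < n := i.isLt
    have hjn : (j : ℕ) < n := j.isLt
    have hij' : (i : ℕ) < (j : ℕ) := hij
    omega
  obtain ⟨a, ha⟩ := hnonempty
  rw [mem_filter, mem_filter] at ha
  obtain ⟨⟨-, ha1⟩, ha2⟩ := ha
  exact hA ⟨a, i, j, ha2, hij, hne, ha1⟩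

lemma avoids_of_mono {π : Equiv.Perm (Fin n)}
    (h1 : ∀ i j : Fin n, i < π i → j < π j → i < j → π i < π j)
    (h2 : ∀ i j : Fin n, ¬ i < π i → ¬ j < π j → i < j → π i < π j) :
    Avoids321 π := by
  rintro ⟨i, j, k, hij, hjk, h3, h4⟩
  by_cases ci : i < π i <;> by_cases cj : j < π j <;> by_cases ck : k < π k
  · exact absurd (h1 i j ci cj hij) (lt_asymm h4)
  · exact absurd (h1 i j ci cj hij) (lt_asymm h4)
  · exact absurd (h1 i k ci ck (hij.trans hjk)) (lt_asymm (h3.trans h4))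
  · exact absurd (h2 j k cj ck hjk) (lt_asymm h3)
  · exact absurd (h1 j k cj ck hjk) (lt_asymm h3)
  · exact absurd (h2 i k ci ck (hij.trans hjk)) (lt_asymm (h3.trans h4))
  · exact absurd (h2 i j ci cj hij) (lt_asymm h4)
  · exact absurd (h2 i j ci cj hij) (lt_asymm h4)

variable {n e : ℕ}

noncomputable def excSet (π : Equiv.Perm (Fin n)) : Finset (Fin n) :=
  univ.filter (fun i => i < π i)

noncomputable def Emap (π : Equiv.Perm (Fin n)) : Finset ℕ :=
  (excSet π).image Fin.val

noncomputable def Vmap (π : Equiv.Perm (Fin n)) : Finset ℕ :=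
  (excSet π).image (fun i => (π i).val)

lemma dom_sorted {E V : Finset ℕ} (h : Dom E V) {k : ℕ} (hE : E.card = k) (hV : V.card = k)
    (j : Fin k) : E.orderEmbOfFin hE j < V.orderEmbOfFin hV j := by
  apply orderEmb_lt_of_card_filter
  have h2 := card_filter_le_orderEmb V hV j
  have h3 := h (V.orderEmbOfFin hV j)
  omega

lemma attachFin_orderEmb (s : Finset ℕ) {k : ℕ} (hs : ∀ m ∈ s, m < n)
    (h1 : (s.attachFin hs).card = k) (h2 : s.card = k) (j : Fin k) :
    (((s.attachFin hs).orderEmbOfFin h1 j : Fin n) : ℕ) = s.orderEmbOfFin h2 j := by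
  have hu := Finset.orderEmbOfFin_unique h2
    (f := fun j => (((s.attachFin hs).orderEmbOfFin h1 j : Fin n) : ℕ)) ?_ ?_
  · exact congrFun hu j
  · intro x
    have := Finset.orderEmbOfFin_mem (s.attachFin hs) h1 x
    rwa [Finset.mem_attachFin] at this
  · intro x y hxy
    have : (s.attachFin hs).orderEmbOfFin h1 x < (s.attachFin hs).orderEmbOfFin h1 y :=
      (s.attachFin hs).orderEmbOfFin h1 |>.strictMono hxy
    exact this

lemma card_attachFin_filter (s : Finset ℕ) (hs : ∀ m ∈ s, m < n) (P : ℕ → Prop)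
    [DecidablePred P] :
    ((s.attachFin hs).filter (fun (a : Fin n) => P a.val)).card = (s.filter P).card := by
  apply card_nbij (i := fun (a : Fin n) => a.val)
  · intro a ha
    rw [mem_coe, mem_filter, mem_attachFin] at ha
    exact mem_coe.mpr (mem_filter.mpr ⟨ha.1, ha.2⟩)
  · intro a _ b _ hab
    exact Fin.val_injective hab
  · intro m hm
    rw [mem_coe, mem_filter] at hm
    have hmn : m < n := hs m hm.1
    refine ⟨⟨m, hmn⟩, ?_, rfl⟩
    rw [mem_coe, mem_filter, mem_attachFin]
    exact ⟨hm.1, hm.2⟩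

lemma attachFin_image_val (s : Finset ℕ) (hs : ∀ m ∈ s, m < n) :
    (s.attachFin hs).image Fin.val = s := by
  ext m
  simp only [mem_image, mem_attachFin]
  constructor
  · rintro ⟨a, ha, rfl⟩; exact ha
  · intro hm; exact ⟨⟨m, hs m hm⟩, hm, rfl⟩

lemma image_compl (π : Equiv.Perm (Fin n)) (F : Finset (Fin n)) :
    (univ \ F).image π = univ \ F.image π := by
  ext v
  constructor
  · intro h
    obtain ⟨a, ha, rfl⟩ := mem_image.mp h
    rw [mem_sdiff] at ha ⊢
    refine ⟨mem_univ _, fun hc => ?_⟩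
    obtain ⟨b, hb, hba⟩ := mem_image.mp hc
    exact ha.2 (π.injective hba ▸ hb)
  · intro h
    rw [mem_sdiff] at h
    refine mem_image.mpr ⟨π.symm v, ?_, π.apply_symm_apply v⟩
    rw [mem_sdiff]
    exact ⟨mem_univ _, fun hc =>
      h.2 (mem_image.mpr ⟨π.symm v, hc, π.apply_symm_apply v⟩)⟩

lemma compl_filter_card (s : Finset (Fin n)) (x : Fin n) :
    ((univ \ s).filter (· ≤ x)).card = ((x : ℕ) + 1) - (s.filter (· ≤ x)).card := by
  have h1 : (univ \ s).filter (· ≤ x) = (univ.filter (· ≤ x)) \ (s.filter (· ≤ x)) := by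
    ext a
    simp only [mem_filter, mem_sdiff, mem_univ, true_and]
    tauto
  have h2 : univ.filter (· ≤ x) = Iic x := by
    ext a; simp [mem_Iic]
  rw [h1, card_sdiff_of_subset (filter_subset_filter _ (subset_univ s)), h2, Fin.card_Iic]

-- forward map lands in the right place
lemma Emap_subset (π : Equiv.Perm (Fin n)) : Emap π ⊆ range n := by
  intro m hm
  obtain ⟨a, _, rfl⟩ := mem_image.mp hm
  exact mem_range.mpr a.isLt

lemma Vmap_subset (π : Equiv.Perm (Fin n)) : Vmap π ⊆ range n := by
  intro m hm
  obtain ⟨a, _, rfl⟩ := mem_image.mp hm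
  exact mem_range.mpr (π a).isLt

lemma Emap_card (π : Equiv.Perm (Fin n)) : (Emap π).card = (excSet π).card :=
  card_image_of_injective _ Fin.val_injective

lemma valPerm_injective (π : Equiv.Perm (Fin n)) :
    Function.Injective (fun i : Fin n => (π i).val) :=
  fun a b h => π.injective (Fin.val_injective h)

lemma Vmap_card (π : Equiv.Perm (Fin n)) : (Vmap π).card = (excSet π).card :=
  card_image_of_injective _ (valPerm_injective π)

lemma Dom_Emap_Vmap (π : Equiv.Perm (Fin n)) : Dom (Emap π) (Vmap π) := by
  intro x
  have hV : (Vmap π).filter (· ≤ x)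
      = ((excSet π).filter (fun (i : Fin n) => (π i).val ≤ x)).image
          (fun i => (π i).val) := by
    rw [Vmap, filter_image]
  have hE : (Emap π).filter (· < x)
      = ((excSet π).filter (fun (i : Fin n) => i.val < x)).image Fin.val := by
    rw [Emap, filter_image]
  rw [hV, hE, card_image_of_injective _ (valPerm_injective π),
    card_image_of_injective _ Fin.val_injective]
  apply card_le_card
  intro i hi
  rw [mem_filter] at hi ⊢
  obtain ⟨hi1, hi2⟩ := hi
  have hexc : i < π i := (mem_filter.mp hi1).2
  have : i.val < (π i).val := hexc
  exact ⟨hi1, by omega⟩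

lemma mem_excSet {π : Equiv.Perm (Fin n)} {i : Fin n} : i ∈ excSet π ↔ i < π i := by
  simp [excSet]

lemma orderEmbOfFin_congr {α : Type*} [LinearOrder α] {s t : Finset α} (hst : s = t) {k : ℕ}
    (hs : s.card = k) (ht : t.card = k) (j : Fin k) :
    s.orderEmbOfFin hs j = t.orderEmbOfFin ht j := by
  subst hst; rfl

lemma exc_emb (π : Equiv.Perm (Fin n)) (hA : Avoids321 π) {k : ℕ}
    (hFk : (excSet π).card = k) (W : Finset (Fin n)) (hW : (excSet π).image π = W)
    (hWk : W.card = k) (j : Fin k) :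
    π ((excSet π).orderEmbOfFin hFk j) = W.orderEmbOfFin hWk j := by
  have hu := Finset.orderEmbOfFin_unique (s := W) hWk
    (f := fun j => π ((excSet π).orderEmbOfFin hFk j)) ?_ ?_
  · exact congrFun hu j
  · intro x
    rw [← hW]
    exact mem_image_of_mem _ (Finset.orderEmbOfFin_mem _ _ _)
  · intro x y hxy
    have h1 := Finset.orderEmbOfFin_mem (excSet π) hFk x
    have h2 := Finset.orderEmbOfFin_mem (excSet π) hFk y
    rw [mem_excSet] at h1 h2
    exact mono_exc hA h1 h2 (((excSet π).orderEmbOfFin hFk).strictMono hxy)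

lemma nonexc_emb (π : Equiv.Perm (Fin n)) (hA : Avoids321 π) {k : ℕ}
    (hFk : (univ \ excSet π).card = k) (W : Finset (Fin n))
    (hW : (univ \ excSet π).image π = W) (hWk : W.card = k) (j : Fin k) :
    π ((univ \ excSet π).orderEmbOfFin hFk j) = W.orderEmbOfFin hWk j := by
  have hu := Finset.orderEmbOfFin_unique (s := W) hWk
    (f := fun j => π ((univ \ excSet π).orderEmbOfFin hFk j)) ?_ ?_
  · exact congrFun hu j
  · intro x
    rw [← hW]
    exact mem_image_of_mem _ (Finset.orderEmbOfFin_mem _ _ _)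
  · intro x y hxy
    have h1 := Finset.orderEmbOfFin_mem (univ \ excSet π) hFk x
    have h2 := Finset.orderEmbOfFin_mem (univ \ excSet π) hFk y
    rw [mem_sdiff] at h1 h2
    have h1' := fun hc => h1.2 (mem_excSet.mpr hc)
    have h2' := fun hc => h2.2 (mem_excSet.mpr hc)
    exact mono_nonexc hA h1' h2' (((univ \ excSet π).orderEmbOfFin hFk).strictMono hxy)

lemma inj_aux {π π' : Equiv.Perm (Fin n)} (hA : Avoids321 π) (hA' : Avoids321 π')
    (hE : Emap π = Emap π') (hV : Vmap π = Vmap π') : π = π' := by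
  have hset : excSet π = excSet π' := by
    ext i
    constructor <;> intro hi
    · have h1 : i.val ∈ Emap π' := hE ▸ mem_image_of_mem Fin.val hi
      obtain ⟨a, ha, hav⟩ := mem_image.mp h1
      exact (Fin.val_injective hav) ▸ ha
    · have h1 : i.val ∈ Emap π := hE.symm ▸ mem_image_of_mem Fin.val hi
      obtain ⟨a, ha, hav⟩ := mem_image.mp h1
      exact (Fin.val_injective hav) ▸ ha
  have himg : (excSet π).image π = (excSet π').image π' := by
    apply Finset.image_injective Fin.val_injective
    rw [image_image, image_image]
    show Vmap π = Vmap π'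
    exact hV
  apply Equiv.ext
  intro i
  by_cases hi : i ∈ excSet π
  · set W := (excSet π).image π with hWdef
    have hWk : W.card = (excSet π).card := card_image_of_injective _ π.injective
    set j := ((excSet π).orderIsoOfFin rfl).symm ⟨i, hi⟩ with hjdef
    have hemb : (excSet π).orderEmbOfFin rfl j = i := by
      rw [← Finset.coe_orderIsoOfFin_apply, hjdef, OrderIso.apply_symm_apply]
    have hFk' : (excSet π').card = (excSet π).card := by rw [hset]
    have e1 := exc_emb π hA rfl W rfl hWk j
    have e2 := exc_emb π' hA' hFk' W himg.symm hWk j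
    have hemb' : (excSet π').orderEmbOfFin hFk' j = i := by
      rw [orderEmbOfFin_congr hset.symm hFk' rfl, hemb]
    rw [hemb] at e1
    rw [hemb'] at e2
    rw [e1, e2]
  · have hic : i ∈ univ \ excSet π := mem_sdiff.mpr ⟨mem_univ _, hi⟩
    set W := (univ \ excSet π).image π with hWdef
    have hWk : W.card = (univ \ excSet π).card := card_image_of_injective _ π.injective
    set j := ((univ \ excSet π).orderIsoOfFin rfl).symm ⟨i, hic⟩ with hjdef
    have hemb : (univ \ excSet π).orderEmbOfFin rfl j = i := by
      rw [← Finset.coe_orderIsoOfFin_apply, hjdef, OrderIso.apply_symm_apply]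
    have hFk' : (univ \ excSet π').card = (univ \ excSet π).card := by rw [hset]
    have hW' : (univ \ excSet π').image π' = W := by
      rw [image_compl, hWdef, image_compl, himg]
    have e1 := nonexc_emb π hA rfl W rfl hWk j
    have e2 := nonexc_emb π' hA' hFk' W hW' hWk j
    have hemb' : (univ \ excSet π').orderEmbOfFin hFk' j = i := by
      rw [orderEmbOfFin_congr (by rw [hset] : univ \ excSet π' = univ \ excSet π) hFk' rfl, hemb]
    rw [hemb] at e1
    rw [hemb'] at e2
    rw [e1, e2]

lemma surj_aux (E V : Finset ℕ) (hEs : E ⊆ range n) (hEc : E.card = e)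
    (hVs : V ⊆ range n) (hVc : V.card = e) (hdom : Dom E V) :
    ∃ π : Equiv.Perm (Fin n), Avoids321 π ∧ (excSet π).card = e ∧ Emap π = E ∧ Vmap π = V := by
  have hEn : ∀ m ∈ E, m < n := fun m hm => mem_range.mp (hEs hm)
  have hVn : ∀ m ∈ V, m < n := fun m hm => mem_range.mp (hVs hm)
  set Ef := E.attachFin hEn with hEfdef
  set Vf := V.attachFin hVn with hVfdef
  have hEfc : Ef.card = e := by rw [hEfdef, card_attachFin, hEc]
  have hVfc : Vf.card = e := by rw [hVfdef, card_attachFin, hVc]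
  have hEcc : (univ \ Ef).card = n - e := by
    rw [card_sdiff_of_subset (subset_univ _), card_univ, Fintype.card_fin, hEfc]
  have hVcc : (univ \ Vf).card = n - e := by
    rw [card_sdiff_of_subset (subset_univ _), card_univ, Fintype.card_fin, hVfc]
  set σ : Fin n → Fin n := fun i =>
    if h : i ∈ Ef then Vf.orderEmbOfFin hVfc ((Ef.orderIsoOfFin hEfc).symm ⟨i, h⟩)
    else (univ \ Vf).orderEmbOfFin hVcc (((univ \ Ef).orderIsoOfFin hEcc).symm
      ⟨i, mem_sdiff.mpr ⟨mem_univ _, h⟩⟩) with hσ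
  have f1 : ∀ i (h : i ∈ Ef),
      σ i = Vf.orderEmbOfFin hVfc ((Ef.orderIsoOfFin hEfc).symm ⟨i, h⟩) :=
    fun i h => dif_pos h
  have f2 : ∀ i (h : i ∉ Ef),
      σ i = (univ \ Vf).orderEmbOfFin hVcc (((univ \ Ef).orderIsoOfFin hEcc).symm
        ⟨i, mem_sdiff.mpr ⟨mem_univ _, h⟩⟩) :=
    fun i h => dif_neg h
  have m1 : ∀ i, i ∈ Ef → σ i ∈ Vf := fun i h => by
    rw [f1 i h]; exact Finset.orderEmbOfFin_mem _ _ _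
  have m2 : ∀ i, i ∉ Ef → σ i ∈ univ \ Vf := fun i h => by
    rw [f2 i h]; exact Finset.orderEmbOfFin_mem _ _ _
  have hinj : Function.Injective σ := by
    intro x y hxy
    by_cases hx : x ∈ Ef <;> by_cases hy : y ∈ Ef
    · rw [f1 x hx, f1 y hy] at hxy
      have h2 := (Vf.orderEmbOfFin hVfc).injective hxy
      have h3 := (Ef.orderIsoOfFin hEfc).symm.injective h2
      exact Subtype.ext_iff.mp h3
    · exfalso
      have hm := m1 x hx
      rw [hxy] at hm
      exact (mem_sdiff.mp (m2 y hy)).2 hm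
    · exfalso
      have hm := m1 y hy
      rw [← hxy] at hm
      exact (mem_sdiff.mp (m2 x hx)).2 hm
    · rw [f2 x hx, f2 y hy] at hxy
      have h2 := ((univ \ Vf).orderEmbOfFin hVcc).injective hxy
      have h3 := ((univ \ Ef).orderIsoOfFin hEcc).symm.injective h2
      exact Subtype.ext_iff.mp h3
  set π : Equiv.Perm (Fin n) := Equiv.ofBijective σ (Finite.injective_iff_bijective.mp hinj)
    with hπdef
  have hπ : ∀ i, π i = σ i := fun i => rfl
  have hx1 : ∀ i, i ∈ Ef → i < σ i := by
    intro i h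
    set j := (Ef.orderIsoOfFin hEfc).symm ⟨i, h⟩ with hj
    have hiemb : Ef.orderEmbOfFin hEfc j = i := by
      rw [← Finset.coe_orderIsoOfFin_apply, hj, OrderIso.apply_symm_apply]
    have hv1 : (i : ℕ) = E.orderEmbOfFin hEc j := by
      rw [← hiemb, attachFin_orderEmb E hEn hEfc hEc j]
    have hv2 : ((σ i : Fin n) : ℕ) = V.orderEmbOfFin hVc j := by
      rw [f1 i h]
      exact attachFin_orderEmb V hVn hVfc hVc j
    have hlt := dom_sorted hdom hEc hVc j
    rw [← hv1, ← hv2] at hlt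
    exact hlt
  have hx2 : ∀ i, i ∉ Ef → ¬ (i < σ i) := by
    intro i h
    have hic : i ∈ univ \ Ef := mem_sdiff.mpr ⟨mem_univ _, h⟩
    set j := ((univ \ Ef).orderIsoOfFin hEcc).symm ⟨i, mem_sdiff.mpr ⟨mem_univ _, h⟩⟩ with hj
    have hiemb : (univ \ Ef).orderEmbOfFin hEcc j = i := by
      rw [← Finset.coe_orderIsoOfFin_apply, hj, OrderIso.apply_symm_apply]
    rw [f2 i h, not_lt]
    apply orderEmb_le_of_card_filter
    have hEj : (((univ \ Ef)).filter (· ≤ i)).card = (j : ℕ) + 1 := by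
      conv_lhs => rw [← hiemb]
      exact card_filter_le_orderEmb _ hEcc j
    have hVfi : (Vf.filter (· ≤ i)).card = (V.filter (· ≤ (i : ℕ))).card := by
      rw [← card_attachFin_filter V hVn (· ≤ (i : ℕ)), ← hVfdef]
      exact congrArg card (filter_congr (fun a _ => Iff.rfl))
    have hEfi : (Ef.filter (· ≤ i)).card = (E.filter (· ≤ (i : ℕ))).card := by
      rw [← card_attachFin_filter E hEn (· ≤ (i : ℕ)), ← hEfdef]
      exact congrArg card (filter_congr (fun a _ => Iff.rfl))
    have hcV := compl_filter_card Vf i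
    have hcE := compl_filter_card Ef i
    have hd1 := hdom (i : ℕ)
    have hd2 : (E.filter (· < (i : ℕ))).card ≤ (E.filter (· ≤ (i : ℕ))).card := by
      apply card_le_card
      intro a ha
      rw [mem_filter] at ha ⊢
      exact ⟨ha.1, ha.2.le⟩
    have hEfle : (Ef.filter (· ≤ i)).card ≤ (i : ℕ) + 1 := by
      calc (Ef.filter (· ≤ i)).card ≤ (Iic i).card := by
            apply card_le_card
            intro a ha
            rw [mem_filter] at ha
            exact mem_Iic.mpr ha.2
        _ = (i : ℕ) + 1 := Fin.card_Iic i
    omega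
  have hmono1 : ∀ i j : Fin n, i < σ i → j < σ j → i < j → σ i < σ j := by
    intro i j hi hj hij
    have hiE : i ∈ Ef := by by_contra hc; exact hx2 i hc hi
    have hjE : j ∈ Ef := by by_contra hc; exact hx2 j hc hj
    rw [f1 i hiE, f1 j hjE]
    apply (Vf.orderEmbOfFin hVfc).strictMono
    exact (Ef.orderIsoOfFin hEfc).symm.strictMono (Subtype.mk_lt_mk.mpr hij)
  have hmono2 : ∀ i j : Fin n, ¬ i < σ i → ¬ j < σ j → i < j → σ i < σ j := by
    intro i j hi hj hij
    have hiE : i ∉ Ef := fun hc => hi (hx1 i hc)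
    have hjE : j ∉ Ef := fun hc => hj (hx1 j hc)
    rw [f2 i hiE, f2 j hjE]
    apply ((univ \ Vf).orderEmbOfFin hVcc).strictMono
    exact ((univ \ Ef).orderIsoOfFin hEcc).symm.strictMono (Subtype.mk_lt_mk.mpr hij)
  have hexcEf : excSet π = Ef := by
    ext i
    rw [mem_excSet]
    constructor
    · intro hlt
      by_contra hc
      exact hx2 i hc hlt
    · exact hx1 i
  refine ⟨π, avoids_of_mono hmono1 hmono2, ?_, ?_, ?_⟩
  · rw [hexcEf, hEfc]
  · rw [Emap, hexcEf, hEfdef, attachFin_image_val]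
  · have himgσ : Ef.image σ = Vf := by
      apply eq_of_subset_of_card_le
      · intro v hv
        obtain ⟨i, hi, rfl⟩ := mem_image.mp hv
        exact m1 i hi
      · rw [card_image_of_injective _ hinj, hEfc, hVfc]
    calc Vmap π = (Ef.image σ).image Fin.val := by rw [Vmap, hexcEf, image_image]; rfl
      _ = Vf.image Fin.val := by rw [himgσ]
      _ = V := by rw [hVfdef, attachFin_image_val]


open scoped Classical in
theorem narayana_count (n e : ℕ) (hn : 0 < n) :
    n * (univ.filter (fun π : Equiv.Perm (Fin n) =>
        Avoids321 π ∧ (univ.filter (fun i => i < π i)).card = e)).card =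
      Nat.choose n e * Nat.choose n (e + 1) := by
  have hbij : (univ.filter (fun π : Equiv.Perm (Fin n) =>
      Avoids321 π ∧ (univ.filter (fun i => i < π i)).card = e)).card = (Pst n e e).card := by
    apply card_bij (i := fun π _ => (Emap π, Vmap π))
    · intro π hπ
      rw [mem_filter] at hπ
      obtain ⟨-, hA, hcard⟩ := hπ
      rw [mem_Pst]
      exact ⟨⟨Emap_subset π, (Emap_card π).trans hcard⟩,
        ⟨Vmap_subset π, (Vmap_card π).trans hcard⟩, Dom_Emap_Vmap π⟩
    · intro π1 h1 π2 h2 heq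
      rw [mem_filter] at h1 h2
      exact inj_aux h1.2.1 h2.2.1 (congrArg Prod.fst heq) (congrArg Prod.snd heq)
    · intro p hp
      rw [mem_Pst] at hp
      obtain ⟨⟨h1, h2⟩, ⟨h3, h4⟩, h5⟩ := hp
      obtain ⟨π, hA, hc, hEm, hVm⟩ := surj_aux p.1 p.2 h1 h2 h3 h4 h5
      exact ⟨π, mem_filter.mpr ⟨mem_univ _, hA, hc⟩, Prod.ext hEm hVm⟩
  rw [hbij]
  exact n_mul_Pst n e hn
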